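/- Let (Ω, Σ, P) be a probability space, let a < b be extended reals, let f : (a,b) → ℝ be a twice differentiable convex function, and let X : Ω → (a,b) be a random variable such that X, f(X), f'(X), and X·f'(X) are all integrable. Then 0 ≤ E[f(X)] − f(E[X]) ≤ E[X·f'(X)] − E[X]·E[f'(X)]. -/

import Mathlib

open MeasureTheory ProbabilityTheory Finset

/-- Tangent line inequality for convex functions. -/
lemma tangent_line_le_aux {S : Set ℝ} {f : ℝ → ℝ} (hconv : ConvexOn ℝ S f) {x y c : ℝ}
    (hx : x ∈ S) (hy : y ∈ S) (hd : HasDerivAt f c y) :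
    f y + c * (x - y) ≤ f x := by
  rcases lt_trichotomy x y with h | h | h
  · have hs := hconv.slope_le_of_hasDerivAt hx hy h hd
    rw [slope_def_field] at hs
    have hyx : (0:ℝ) < y - x := by linarith
    rw [div_le_iff₀ hyx] at hs
    nlinarith
  · simp [h]
  · have hs := hconv.le_slope_of_hasDerivAt hy hx h hd
    rw [slope_def_field] at hs
    have hxy : (0:ℝ) < x - y := by linarith
    rw [le_div_iff₀ hxy] at hs
    nlinarith

/-- Let `(Ω, Σ, P)` be a probability space, let `a < b` be extended reals,
let `f : (a,b) → ℝ` be a twice differentiable convex function, and let `X : Ω → (a,b)` be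
a random variable such that `X`, `f(X)`, `f'(X)` and `X·f'(X)` are integrable. Then
`0 ≤ E[f(X)] − f(E[X]) ≤ E[X·f'(X)] − E[X]·E[f'(X)]`. -/
theorem jensen_gap_first_order
    {Ω : Type*} [MeasurableSpace Ω] (P : Measure Ω) [IsProbabilityMeasure P]
    (a b : EReal) (hab : a < b)
    (f f' f'' : ℝ → ℝ)
    (hconv : ConvexOn ℝ {x : ℝ | a < (x : EReal) ∧ (x : EReal) < b} f)
    (hderiv : ∀ x : ℝ, a < (x : EReal) → (x : EReal) < b → HasDerivAt f (f' x) x)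
    (hderiv2 : ∀ x : ℝ, a < (x : EReal) → (x : EReal) < b → HasDerivAt f' (f'' x) x)
    (X : Ω → ℝ)
    (hX : ∀ ω, a < (X ω : EReal) ∧ (X ω : EReal) < b)
    (hXint : Integrable X P)
    (hfXint : Integrable (fun ω => f (X ω)) P)
    (hf'Xint : Integrable (fun ω => f' (X ω)) P)
    (hXf'Xint : Integrable (fun ω => X ω * f' (X ω)) P) :
    0 ≤ (∫ ω, f (X ω) ∂P) - f (∫ ω, X ω ∂P) ∧
      (∫ ω, f (X ω) ∂P) - f (∫ ω, X ω ∂P) ≤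
        (∫ ω, X ω * f' (X ω) ∂P) - (∫ ω, X ω ∂P) * (∫ ω, f' (X ω) ∂P) := by
  set μ := ∫ ω, X ω ∂P with hμdef
  have hΩ : Nonempty Ω := Filter.nonempty_of_neBot (ae P)
  obtain ⟨ω₀⟩ := hΩ
  -- strict positivity helper
  have hpos : ∀ (g : Ω → ℝ), Integrable g P → (∀ ω, 0 < g ω) → 0 < ∫ ω, g ω ∂P := by
    intro g hint hgt
    rcases ((integral_nonneg (fun ω => (hgt ω).le)) : 0 ≤ ∫ ω, g ω ∂P).lt_or_eq with h | h
    · exact h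
    · exfalso
      have h0 : g =ᵐ[P] 0 := (integral_eq_zero_iff_of_nonneg (fun ω => (hgt ω).le) hint).mp h.symm
      have : ∀ᵐ ω ∂P, False := by
        filter_upwards [h0] with ω hω
        exact (hgt ω).ne' hω
      exact this.exists.choose_spec
  -- μ ∈ (a, b)
  have hμa : a < (μ : EReal) := by
    induction a with
    | bot => exact EReal.bot_lt_coe μ
    | coe a₀ =>
      have hgt : ∀ ω, 0 < X ω - a₀ := fun ω => by
        have := (hX ω).1
        exact sub_pos.mpr (by exact_mod_cast this)
      have := hpos (fun ω => X ω - a₀) (hXint.sub (integrable_const a₀)) hgt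
      rw [integral_sub hXint (integrable_const a₀), integral_const, probReal_univ] at this
      simp only [ENNReal.toReal_one, one_smul] at this
      exact_mod_cast (by linarith [this] : a₀ < μ)
    | top => exact absurd (hX ω₀).1 (by simp)
  have hμb : (μ : EReal) < b := by
    induction b with
    | top => exact EReal.coe_lt_top μ
    | coe b₀ =>
      have hgt : ∀ ω, 0 < b₀ - X ω := fun ω => by
        have := (hX ω).2
        exact sub_pos.mpr (by exact_mod_cast this)
      have := hpos (fun ω => b₀ - X ω) ((integrable_const b₀).sub hXint) hgt
      rw [integral_sub (integrable_const b₀) hXint, integral_const, probReal_univ] at this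
      simp only [ENNReal.toReal_one, one_smul] at this
      exact_mod_cast (by linarith [this] : μ < b₀)
    | bot => exact absurd (hX ω₀).2 (by simp)
  have hμmem : μ ∈ {x : ℝ | a < (x : EReal) ∧ (x : EReal) < b} := ⟨hμa, hμb⟩
  have hXmem : ∀ ω, X ω ∈ {x : ℝ | a < (x : EReal) ∧ (x : EReal) < b} := fun ω => hX ω
  -- lower bound
  have h1 : f μ ≤ ∫ ω, f (X ω) ∂P := by
    have key : ∀ ω, f μ + f' μ * (X ω - μ) ≤ f (X ω) := fun ω =>
      tangent_line_le_aux hconv (hXmem ω) hμmem (hderiv μ hμa hμb)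
    have hi1 : Integrable (fun ω => X ω - μ) P := hXint.sub (integrable_const μ)
    have hi2 : Integrable (fun ω => f' μ * (X ω - μ)) P := hi1.const_mul _
    have hint : Integrable (fun ω => f μ + f' μ * (X ω - μ)) P := (integrable_const _).add hi2
    have hle := integral_mono hint hfXint key
    rw [integral_add (integrable_const _) hi2,
      integral_const_mul, integral_sub hXint (integrable_const μ), integral_const,
      probReal_univ] at hle
    simp only [integral_const, probReal_univ, ENNReal.toReal_one, one_smul, smul_eq_mul,
      one_mul, ← hμdef, sub_self, mul_zero, add_zero] at hle
    exact hle
  -- upper bound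
  have h2 : (∫ ω, f (X ω) ∂P) - f μ ≤
      (∫ ω, X ω * f' (X ω) ∂P) - μ * (∫ ω, f' (X ω) ∂P) := by
    have key : ∀ ω, f (X ω) + f' (X ω) * (μ - X ω) ≤ f μ := fun ω =>
      tangent_line_le_aux hconv hμmem (hXmem ω) (hderiv (X ω) (hX ω).1 (hX ω).2)
    have key' : ∀ ω, f (X ω) + (μ * f' (X ω) - X ω * f' (X ω)) ≤ f μ := fun ω => by
      have := key ω; nlinarith [this]
    have hi1 : Integrable (fun ω => μ * f' (X ω)) P := hf'Xint.const_mul μ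
    have hi2 : Integrable (fun ω => μ * f' (X ω) - X ω * f' (X ω)) P := hi1.sub hXf'Xint
    have hint : Integrable (fun ω => f (X ω) + (μ * f' (X ω) - X ω * f' (X ω))) P :=
      hfXint.add hi2
    have hle := integral_mono hint (integrable_const (f μ)) key'
    rw [integral_add hfXint hi2,
      integral_sub hi1 hXf'Xint, integral_const_mul, integral_const,
      probReal_univ] at hle
    simp only [ENNReal.toReal_one, one_smul] at hle
    linarith
  exact ⟨by linarith, by linarith⟩
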